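/- Let p(x) = p₀x² + 2p₁x + p₂ be a real quadratic with p₁² = p₀p₂ (i.e. Q(p) = 0). Let U ⊆ ℝ be an open set on which p is nonvanishing and let A : ℝ → ℝ be twice differentiable on U. Then for every x ∈ U, p(x)² · d/dx[ p(x) · d/dx( A(x)/p(x)² ) ] = p(x)A''(x) − 3p'(x)A'(x) + 12p₀A(x). -/

import Mathlib

set_option maxHeartbeats 1000000


/-- For a null real quadratic `p` (i.e. `p₁² = p₀p₂`), nonvanishing on an open set `U`,
and `A` twice differentiable on `U`, for every `x ∈ U`:
`p(x)² · d/dx[p(x) · d/dx(A(x)/p(x)²)] = p(x)A''(x) − 3p'(x)A'(x) + 12p₀A(x)`. -/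
theorem null_quadratic_transvectant_identity
    (p0 p1 p2 : ℝ) (hp : p1 ^ 2 = p0 * p2)
    (U : Set ℝ) (hU : IsOpen U)
    (hpU : ∀ x ∈ U, p0 * x ^ 2 + 2 * p1 * x + p2 ≠ 0)
    (A : ℝ → ℝ)
    (hA : ∀ x ∈ U, DifferentiableAt ℝ A x ∧ DifferentiableAt ℝ (deriv A) x) :
    ∀ x ∈ U,
      (p0 * x ^ 2 + 2 * p1 * x + p2) ^ 2 *
        deriv (fun t => (p0 * t ^ 2 + 2 * p1 * t + p2) *
          deriv (fun s => A s / (p0 * s ^ 2 + 2 * p1 * s + p2) ^ 2) t) x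
      = (p0 * x ^ 2 + 2 * p1 * x + p2) * deriv (deriv A) x
          - 3 * (2 * p0 * x + 2 * p1) * deriv A x + 12 * p0 * A x := by
  intro x hx
  have hP : ∀ t : ℝ, HasDerivAt (fun s => p0 * s ^ 2 + 2 * p1 * s + p2)
      (2 * p0 * t + 2 * p1) t := by
    intro t
    have h := (((hasDerivAt_pow 2 t).const_mul p0).add
      ((hasDerivAt_id t).const_mul (2 * p1))).add_const p2
    exact h.congr_deriv (by norm_num; ring)
  have hinner : ∀ t ∈ U, deriv (fun s => A s / (p0 * s ^ 2 + 2 * p1 * s + p2) ^ 2) t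
      = (deriv A t * (p0 * t ^ 2 + 2 * p1 * t + p2)
          - 2 * A t * (2 * p0 * t + 2 * p1)) / (p0 * t ^ 2 + 2 * p1 * t + p2) ^ 3 := by
    intro t ht
    have hPt := hpU t ht
    have hd := ((hA t ht).1.hasDerivAt.div ((hP t).pow 2) (pow_ne_zero 2 hPt))
    rw [(show HasDerivAt (fun s => A s / (p0 * s ^ 2 + 2 * p1 * s + p2) ^ 2) _ t from hd).deriv]
    simp only [Pi.pow_apply, Nat.cast_ofNat, Nat.reduceSub, pow_one]
    field_simp
  have hg : (fun t => (p0 * t ^ 2 + 2 * p1 * t + p2) *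
        deriv (fun s => A s / (p0 * s ^ 2 + 2 * p1 * s + p2) ^ 2) t)
      =ᶠ[nhds x] (fun t => (deriv A t * (p0 * t ^ 2 + 2 * p1 * t + p2)
          - 2 * A t * (2 * p0 * t + 2 * p1)) / (p0 * t ^ 2 + 2 * p1 * t + p2) ^ 2) := by
    filter_upwards [hU.mem_nhds hx] with t ht
    rw [hinner t ht]
    have hPt := hpU t ht
    field_simp
  rw [hg.deriv_eq]
  have hPx := hpU x hx
  have hlin : HasDerivAt (fun t : ℝ => 2 * p0 * t + 2 * p1) (2 * p0) x := by
    simpa using ((hasDerivAt_id x).const_mul (2 * p0)).add_const (2 * p1)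
  have hN : HasDerivAt (fun t => deriv A t * (p0 * t ^ 2 + 2 * p1 * t + p2)
        - 2 * A t * (2 * p0 * t + 2 * p1))
      (deriv (deriv A) x * (p0 * x ^ 2 + 2 * p1 * x + p2)
        + deriv A x * (2 * p0 * x + 2 * p1)
        - (2 * deriv A x * (2 * p0 * x + 2 * p1) + 2 * A x * (2 * p0))) x := by
    exact ((hA x hx).2.hasDerivAt.mul (hP x)).sub
      (((hA x hx).1.hasDerivAt.const_mul 2).mul hlin)
  have hG := hN.div ((hP x).pow 2) (pow_ne_zero 2 hPx)
  rw [(show HasDerivAt (fun t => (deriv A t * (p0 * t ^ 2 + 2 * p1 * t + p2)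
          - 2 * A t * (2 * p0 * t + 2 * p1)) / (p0 * t ^ 2 + 2 * p1 * t + p2) ^ 2) _ x from hG).deriv]
  simp only [Pi.pow_apply, Nat.cast_ofNat, Nat.reduceSub, pow_one]
  field_simp
  have hPx' : x * (p0 * x + 2 * p1) + p2 ≠ 0 := by convert hPx using 1; ring
  rw [div_eq_iff hPx']
  linear_combination 16 * A x * hp
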